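/- For every field F of characteristic 2 there exist 7 pairwise distinct lines in ℙ²(F) having exactly 7 triple points and no other intersection points (every point lying on at least two of the lines lies on exactly three of them); for F = 𝔽₂ this is the Fano plane configuration. -/

import Mathlib

/-- The projective plane over `F` (also used, by duality, for the lines of that plane). -/
abbrev ProjPlane (F : Type*) [Field F] := Projectivization F (Fin 3 → F)

/-- The point `P` lies on the line `L` (a line is recorded by the projective class of the
coefficient vector of a defining linear form): the pairing of representatives vanishes.
This does not depend on the choice of representatives. -/
def OnLine {F : Type*} [Field F] (P L : ProjPlane F) : Prop :=
  dotProduct P.rep L.rep = 0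

/-- The multiplicity of a point `P` with respect to a configuration `lines`:
the number of lines of the configuration passing through `P`. -/
noncomputable def mult {F : Type*} [Field F] (lines : Set (ProjPlane F))
    (P : ProjPlane F) : ℕ :=
  {L ∈ lines | OnLine P L}.ncard

set_option linter.unusedSectionVars false

namespace Fano

open Matrix

/-- The seven nonzero vectors of `(ZMod 2)³`. -/
def V : Fin 7 → (Fin 3 → ZMod 2) :=
  ![![1,0,0], ![0,1,0], ![0,0,1], ![1,1,0], ![1,0,1], ![0,1,1], ![1,1,1]]

lemma V_surj : ∀ w : Fin 3 → ZMod 2, w ≠ 0 → ∃ k, V k = w := by decide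

lemma V_ne_zero : ∀ k, V k ≠ 0 := by decide

lemma V_inj : Function.Injective V := by decide

lemma cross_V_ne_zero : ∀ i j, i ≠ j → (crossProduct (V i)) (V j) ≠ 0 := by decide

lemma card_V_dot : ∀ k : Fin 7,
    (Finset.univ.filter (fun i => V k ⬝ᵥ V i = 0)).card = 3 := by decide

variable {F : Type*} [Field F] [CharP F 2]

noncomputable def f (F : Type*) [Field F] [CharP F 2] : ZMod 2 →+* F :=
  ZMod.castHom dvd_rfl F

lemma f_inj : Function.Injective (f F) := by
  haveI : Fact (Nat.Prime 2) := ⟨Nat.prime_two⟩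
  exact (f F).injective

/-- The lifted vectors over `F`. -/
noncomputable def u (F : Type*) [Field F] [CharP F 2] (i : Fin 7) : Fin 3 → F :=
  f F ∘ V i

lemma comp_ne_zero {a : Fin 3 → ZMod 2} (ha : a ≠ 0) : f F ∘ a ≠ 0 := by
  intro h
  apply ha
  funext j
  have := congrFun h j
  simpa [map_eq_zero_iff _ f_inj] using this

lemma u_ne_zero (i : Fin 7) : u F i ≠ 0 := comp_ne_zero (V_ne_zero i)

lemma dot_u (i j : Fin 7) : u F i ⬝ᵥ u F j = f F (V i ⬝ᵥ V j) :=
  ((f F).map_dotProduct _ _).symm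

lemma cross_comp (a b : Fin 3 → ZMod 2) :
    (crossProduct (f F ∘ a)) (f F ∘ b) = f F ∘ (crossProduct a) b := by
  simp only [cross_apply]
  funext j
  fin_cases j <;> simp

/-- The seven lines (and seven points) of the Fano configuration. -/
noncomputable def pt (F : Type*) [Field F] [CharP F 2] (i : Fin 7) : ProjPlane F :=
  Projectivization.mk F (u F i) (u_ne_zero i)

/-- Proportional lifted `ZMod 2` vectors are equal. -/
lemma eq_of_smul {a b : Fin 3 → ZMod 2} (hb : b ≠ 0) {c : F} (hc : c ≠ 0)
    (h : c • (f F ∘ b) = f F ∘ a) : a = b := by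
  obtain ⟨j, hj⟩ : ∃ j, b j ≠ 0 := Function.ne_iff.1 hb
  have one_of_ne : ∀ x : ZMod 2, x ≠ 0 → x = 1 := by decide
  have hbj : b j = 1 := one_of_ne _ hj
  have hj' := congrFun h j
  simp only [Pi.smul_apply, Function.comp_apply, hbj, _root_.map_one, smul_eq_mul,
    mul_one] at hj'
  have haj : a j ≠ 0 := by
    intro h0
    rw [h0, map_zero] at hj'
    exact hc hj'
  have hc1 : c = 1 := by rw [hj', one_of_ne _ haj, _root_.map_one]
  rw [hc1, one_smul] at h
  funext i
  exact f_inj (congrFun h i).symm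

lemma pt_inj : Function.Injective (pt F) := by
  intro i j h
  rw [pt, pt, Projectivization.mk_eq_mk_iff] at h
  obtain ⟨a, ha⟩ := h
  exact V_inj (eq_of_smul (V_ne_zero j) a.ne_zero (by simpa [Units.smul_def, u] using ha))

lemma rep_mk_smul (v : Fin 3 → F) (hv : v ≠ 0) :
    ∃ c : F, c ≠ 0 ∧ (Projectivization.mk F v hv).rep = c • v := by
  have h := Projectivization.mk_rep (Projectivization.mk F v hv)
  rw [Projectivization.mk_eq_mk_iff] at h
  obtain ⟨a, ha⟩ := h
  exact ⟨a, a.ne_zero, ha.symm⟩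

lemma onLine_mk (P : ProjPlane F) (w : Fin 3 → F) (hw : w ≠ 0) :
    OnLine P (Projectivization.mk F w hw) ↔ P.rep ⬝ᵥ w = 0 := by
  obtain ⟨c, hc, h⟩ := rep_mk_smul w hw
  rw [OnLine, h, dotProduct_smul, smul_eq_mul, mul_eq_zero]
  simp [hc]

/-- Solutions of two independent linear equations are proportional to the cross product. -/
lemma exists_smul_cross (a b x : Fin 3 → F)
    (ha : x ⬝ᵥ a = 0) (hb : x ⬝ᵥ b = 0) : ∀ n, n = (crossProduct a) b → n ≠ 0 →
    ∃ c : F, x = c • n := by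
  rintro n rfl hn
  set n := (crossProduct a) b with hn'
  have hn0 : n 0 = a 1 * b 2 - a 2 * b 1 := by simp [hn', cross_apply]
  have hn1 : n 1 = a 2 * b 0 - a 0 * b 2 := by simp [hn', cross_apply]
  have hn2 : n 2 = a 0 * b 1 - a 1 * b 0 := by simp [hn', cross_apply]
  rw [dotProduct, Fin.sum_univ_three] at ha hb
  have r01 : x 0 * n 1 = x 1 * n 0 := by
    rw [hn0, hn1]; linear_combination a 2 * hb - b 2 * ha
  have r02 : x 0 * n 2 = x 2 * n 0 := by
    rw [hn0, hn2]; linear_combination b 1 * ha - a 1 * hb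
  have r12 : x 1 * n 2 = x 2 * n 1 := by
    rw [hn1, hn2]; linear_combination a 0 * hb - b 0 * ha
  obtain ⟨k, hk⟩ : ∃ k, n k ≠ 0 := Function.ne_iff.1 hn
  fin_cases k
  · refine ⟨x 0 / n 0, funext fun j => ?_⟩
    have hk' : n 0 ≠ 0 := hk
    fin_cases j
    · show x 0 = x 0 / n 0 * n 0
      rw [div_mul_cancel₀ _ hk']
    · show x 1 = x 0 / n 0 * n 1
      rw [div_mul_eq_mul_div, eq_div_iff hk']
      linear_combination -r01
    · show x 2 = x 0 / n 0 * n 2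
      rw [div_mul_eq_mul_div, eq_div_iff hk']
      linear_combination -r02
  · refine ⟨x 1 / n 1, funext fun j => ?_⟩
    have hk' : n 1 ≠ 0 := hk
    fin_cases j
    · show x 0 = x 1 / n 1 * n 0
      rw [div_mul_eq_mul_div, eq_div_iff hk']
      linear_combination r01
    · show x 1 = x 1 / n 1 * n 1
      rw [div_mul_cancel₀ _ hk']
    · show x 2 = x 1 / n 1 * n 2
      rw [div_mul_eq_mul_div, eq_div_iff hk']
      linear_combination -r12
  · refine ⟨x 2 / n 2, funext fun j => ?_⟩
    have hk' : n 2 ≠ 0 := hk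
    fin_cases j
    · show x 0 = x 2 / n 2 * n 0
      rw [div_mul_eq_mul_div, eq_div_iff hk']
      linear_combination r02
    · show x 1 = x 2 / n 2 * n 1
      rw [div_mul_eq_mul_div, eq_div_iff hk']
      linear_combination r12
    · show x 2 = x 2 / n 2 * n 2
      rw [div_mul_cancel₀ _ hk']

lemma onLine_pt (k i : Fin 7) : OnLine (pt F k) (pt F i) ↔ V k ⬝ᵥ V i = 0 := by
  rw [pt, pt, onLine_mk]
  obtain ⟨c, hc, hrep⟩ := rep_mk_smul (u F k) (u_ne_zero k)
  rw [hrep, smul_dotProduct, smul_eq_mul, mul_eq_zero, or_iff_right hc, dot_u,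
    map_eq_zero_iff _ f_inj]

lemma mult_pt (k : Fin 7) : mult (Set.range (pt F)) (pt F k) = 3 := by
  have hset : {L ∈ Set.range (pt F) | OnLine (pt F k) L}
      = pt F '' ((Finset.univ.filter (fun i => V k ⬝ᵥ V i = 0) : Finset (Fin 7)) : Set (Fin 7)) := by
    ext L
    constructor
    · rintro ⟨⟨i, rfl⟩, hL⟩
      exact ⟨i, by simpa using (onLine_pt k i).1 hL, rfl⟩
    · rintro ⟨i, hi, rfl⟩
      exact ⟨⟨i, rfl⟩, (onLine_pt k i).2 (by simpa using hi)⟩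
  rw [mult, hset, Set.ncard_image_of_injective _ pt_inj, Set.ncard_coe_finset,
    card_V_dot]

lemma mem_range_of_two_le (P : ProjPlane F)
    (h : 2 ≤ mult (Set.range (pt F)) P) : ∃ k, P = pt F k := by
  have hfin : {L ∈ Set.range (pt F) | OnLine P L}.Finite :=
    (Set.finite_range _).subset (Set.sep_subset _ _)
  rw [mult] at h
  obtain ⟨L1, L2, hL1, hL2, hne⟩ := (Set.one_lt_ncard_iff hfin).1 h
  obtain ⟨i, rfl⟩ := hL1.1
  obtain ⟨j, rfl⟩ := hL2.1
  have hij : i ≠ j := fun hh => hne (by rw [hh])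
  have hi : P.rep ⬝ᵥ u F i = 0 := (onLine_mk P _ _).1 hL1.2
  have hj : P.rep ⬝ᵥ u F j = 0 := (onLine_mk P _ _).1 hL2.2
  have hcross : (crossProduct (u F i)) (u F j) = f F ∘ (crossProduct (V i)) (V j) :=
    cross_comp _ _
  have hcn : (crossProduct (u F i)) (u F j) ≠ 0 := by
    rw [hcross]; exact comp_ne_zero (cross_V_ne_zero i j hij)
  obtain ⟨c, hcrep⟩ := exists_smul_cross (u F i) (u F j) P.rep hi hj _ rfl hcn
  obtain ⟨k, hk⟩ := V_surj _ (cross_V_ne_zero i j hij)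
  refine ⟨k, ?_⟩
  rw [← Projectivization.mk_rep P, pt]
  rw [Projectivization.mk_eq_mk_iff']
  refine ⟨c, ?_⟩
  rw [hcrep, hcross, ← hk]
  rfl

lemma pt_range_ncard : (Set.range (pt F)).ncard = 7 := by
  rw [← Set.image_univ, Set.ncard_image_of_injective _ pt_inj, Set.ncard_univ,
    Nat.card_eq_fintype_card, Fintype.card_fin]

end Fano

/-- Over every field of characteristic `2` there is a configuration of `7` pairwise distinct
lines in `ℙ²(F)` with exactly `7` triple points and no other intersection points: every point
lying on at least two of the lines lies on exactly three of them (the Fano configuration). -/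
theorem seven_lines_seven_triple_points (F : Type*) [Field F] [CharP F 2] :
    ∃ lines : Set (ProjPlane F),
      lines.ncard = 7 ∧
      {P : ProjPlane F | mult lines P = 3}.ncard = 7 ∧
      ∀ P : ProjPlane F, 2 ≤ mult lines P → mult lines P = 3 := by
  refine ⟨Set.range (Fano.pt F), Fano.pt_range_ncard, ?_, ?_⟩
  · have : {P : ProjPlane F | mult (Set.range (Fano.pt F)) P = 3} = Set.range (Fano.pt F) := by
      ext P
      constructor
      · intro hP
        obtain ⟨k, rfl⟩ := Fano.mem_range_of_two_le P (by simp only [Set.mem_setOf_eq] at hP; omega)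
        exact ⟨k, rfl⟩
      · rintro ⟨k, rfl⟩
        exact Fano.mult_pt k
    rw [this, Fano.pt_range_ncard]
  · intro P hP
    obtain ⟨k, rfl⟩ := Fano.mem_range_of_two_le P hP
    exact Fano.mult_pt k
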